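/- Let n ≥ 2 and let {E_{u,v}} be a quantum homomorphism from the directed cycle C⃗_n to a directed graph Y. For every vertex u of C⃗_n there exists a vertex v of Y with E_{u,v} ≠ 0, and for any such v, Y contains a directed closed walk of length n from v to v. -/

import Mathlib

/-- The arc relation of the clockwise directed cycle on `Fin n`
(vertices `0, …, n-1`, arcs `i → i+1` mod `n`). -/
def CycleArc (n : ℕ) (i j : Fin n) : Prop := (j : ℕ) = ((i : ℕ) + 1) % n

def chainProd {M : Type*} [Monoid M] (f : ℕ → M) : ℕ → M
  | 0 => 1
  | (m+1) => chainProd f m * f m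

lemma chainProd_congr {M : Type*} [Monoid M] {f g : ℕ → M} :
    ∀ {m : ℕ}, (∀ k < m, f k = g k) → chainProd f m = chainProd g m
  | 0, _ => rfl
  | (m+1), h => by
      rw [chainProd, chainProd, chainProd_congr (fun k hk => h k (by omega)),
        h m (by omega)]

lemma chainProd_zero_propagate {M : Type*} [MonoidWithZero M] (f : ℕ → M) {m m' : ℕ}
    (h : chainProd f m = 0) (hle : m ≤ m') : chainProd f m' = 0 := by
  induction m' with
  | zero => exact Nat.le_zero.mp hle ▸ h
  | succ k ih =>
      rcases Nat.lt_or_ge m (k+1) with h1 | h1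
      · rw [chainProd, ih (by omega), zero_mul]
      · have : m = k + 1 := by omega
        rw [← this]; exact h

lemma chainProd_zero_of_adj {M : Type*} [MonoidWithZero M] (f : ℕ → M) {i m : ℕ}
    (h : f i * f (i+1) = 0) (him : i + 2 ≤ m) : chainProd f m = 0 := by
  have h2 : chainProd f (i+2) = 0 := by
    show chainProd f (i+1+1) = 0
    rw [chainProd, chainProd, mul_assoc, h, mul_zero]
  exact chainProd_zero_propagate f h2 him

open Fin.NatCast

/-- Let `n ≥ 2` and let `{E u v}` be a quantum homomorphism from the directed
cycle `C⃗_n` to a finite directed graph `Y = (β, B)`.  Then for every vertex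
`u` of `C⃗_n` there exists `v` with `E u v ≠ 0`, and for any such `v` the graph
`Y` contains a directed closed walk of length `n` from `v` to `v`. -/
theorem cycle_quantum_hom_closed_walk
    {β : Type*} [Fintype β]
    {V : Type*} [NormedAddCommGroup V] [InnerProductSpace ℂ V]
    [FiniteDimensional ℂ V] [Nontrivial V]
    (n : ℕ) (hn : 2 ≤ n) (B : β → β → Prop)
    (E : Fin n → β → Module.End ℂ V)
    (hsa : ∀ u v, LinearMap.IsSymmetric (E u v))
    (hidem : ∀ u v, E u v * E u v = E u v)
    (hsum : ∀ u, ∑ v, E u v = 1)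
    (horth : ∀ u v v', v ≠ v' → E u v * E u v' = 0)
    (harc : ∀ u u' v v', CycleArc n u u' → ¬ B v v' → E u v * E u' v' = 0) :
    ∀ u : Fin n,
      (∃ v : β, E u v ≠ 0) ∧
      ∀ v : β, E u v ≠ 0 →
        ∃ w : ℕ → β, w 0 = v ∧ w n = v ∧ ∀ i < n, B (w i) (w (i + 1)) := by
  haveI : NeZero n := ⟨by omega⟩
  have hone : (1 : Module.End ℂ V) ≠ 0 := by
    intro h
    obtain ⟨x, hx⟩ := exists_ne (0 : V)
    have : (1 : Module.End ℂ V) x = (0 : Module.End ℂ V) x := by rw [h]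
    simp at this
    exact hx this
  -- value of 1 in Fin n
  have hval1 : ((1 : Fin n) : ℕ) = 1 := by
    have h : ((1 : Fin n) : ℕ) = 1 % n := rfl
    rw [h]
    exact Nat.mod_eq_of_lt (by omega)
  have hcyc : ∀ a : Fin n, CycleArc n a (a + 1) := by
    intro a
    show ((a + 1 : Fin n) : ℕ) = ((a : ℕ) + 1) % n
    rw [Fin.val_add, hval1]
  intro u
  constructor
  · by_contra h
    push_neg at h
    apply hone
    rw [← hsum u]
    exact Finset.sum_eq_zero (fun v _ => h v)
  · intro v hv
    set f : (ℕ → β) → ℕ → Module.End ℂ V :=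
      fun w k => E (u + (k : ℕ)) (w k) with hf
    have key : ∀ m : ℕ, ∃ w : ℕ → β, w 0 = v ∧ chainProd (f w) (m+1) * E u v ≠ 0 := by
      intro m
      induction m with
      | zero =>
          refine ⟨fun _ => v, rfl, ?_⟩
          have h1 : chainProd (f (fun _ => v)) 1 = E u v := by
            show (1 : Module.End ℂ V) * E (u + ((0 : ℕ) : Fin n)) v = E u v
            rw [one_mul]
            norm_num
          rw [h1, hidem]
          exact hv
      | succ m ih =>
          obtain ⟨w, hw0, hne⟩ := ih
          have hsum' : ∑ c, chainProd (f w) (m+1) * E (u + ((m+1 : ℕ) : Fin n)) c * E u v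
              = chainProd (f w) (m+1) * E u v := by
            rw [← Finset.sum_mul, ← Finset.mul_sum, hsum, mul_one]
          have hex : ∃ c, chainProd (f w) (m+1) * E (u + ((m+1 : ℕ) : Fin n)) c * E u v ≠ 0 := by
            by_contra hall
            push_neg at hall
            apply hne
            rw [← hsum']
            exact Finset.sum_eq_zero (fun c _ => hall c)
          obtain ⟨c, hc⟩ := hex
          refine ⟨Function.update w (m+1) c, ?_, ?_⟩
          · rw [Function.update_of_ne (by omega), hw0]
          · have hcongr : chainProd (f (Function.update w (m+1) c)) (m+1)
                = chainProd (f w) (m+1) := by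
              apply chainProd_congr
              intro k hk
              show E (u + (k : ℕ)) (Function.update w (m+1) c k) = E (u + (k : ℕ)) (w k)
              rw [Function.update_of_ne (by omega)]
            show chainProd (f (Function.update w (m+1) c)) (m+1)
                * f (Function.update w (m+1) c) (m+1) * E u v ≠ 0
            rw [hcongr]
            have : f (Function.update w (m+1) c) (m+1) = E (u + ((m+1 : ℕ) : Fin n)) c := by
              show E (u + ((m+1 : ℕ) : Fin n)) (Function.update w (m+1) c (m+1)) = _
              rw [Function.update_self]
            rw [this]
            exact hc
    obtain ⟨w, hw0, hT⟩ := key (n-1)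
    have hn1 : n - 1 + 1 = n := by omega
    rw [hn1] at hT
    refine ⟨fun k => if k < n then w k else v, ?_, ?_, ?_⟩
    · simp only [if_pos (by omega : 0 < n)]; exact hw0
    · simp
    · intro i hi
      rcases Nat.lt_or_ge (i+1) n with hi1 | hge
      · have hne : E (u + (i : ℕ)) (w i) * E (u + ((i+1 : ℕ) : Fin n)) (w (i+1)) ≠ 0 := by
          intro h0
          apply hT
          rw [chainProd_zero_of_adj (f w) h0 (by omega), zero_mul]
        have hB : B (w i) (w (i+1)) := by
          by_contra hb
          apply hne
          have harc' : CycleArc n (u + (i : ℕ)) (u + ((i+1 : ℕ) : Fin n)) := by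
            have : (u + ((i+1 : ℕ) : Fin n)) = (u + (i : ℕ)) + 1 := by
              push_cast
              rw [add_assoc]
            rw [this]
            exact hcyc _
          exact harc _ _ _ _ harc' hb
        simp only [if_pos hi, if_pos hi1]
        exact hB
      · -- last step: i = n - 1
        have hlast : i + 1 = n := by omega
        have hne2 : E (u + (i : ℕ)) (w i) * E u v ≠ 0 := by
          intro h0
          apply hT
          have : n = i + 1 := hlast.symm
          rw [this]
          show chainProd (f w) i * f w i * E u v = 0
          rw [mul_assoc]
          have : f w i * E u v = 0 := h0
          rw [this, mul_zero]
        have harc' : CycleArc n (u + (i : ℕ)) u := by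
          have : u = (u + (i : ℕ)) + 1 := by
            have : ((i : ℕ) : Fin n) + 1 = 0 := by
              have : ((i+1 : ℕ) : Fin n) = ((n : ℕ) : Fin n) := by rw [hlast]
              push_cast at this
              simpa using this
            rw [add_assoc, this, add_zero]
          nth_rewrite 2 [this]
          exact hcyc _
        have hB : B (w i) v := by
          by_contra hb
          exact hne2 (harc _ _ _ _ harc' hb)
        simp only [if_pos hi, if_neg (by omega : ¬ (i + 1 < n))]
        exact hB
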